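/- The subgroup SO_2(ℝ) is not generous in SL_2(ℝ): no finite union of left translates of (SO_2(ℝ))^{SL_2(ℝ)} covers SL_2(ℝ). More precisely, for every A ∈ SL_2(ℝ) the set of x > 0 such that the matrix M_x = [[x^2, x−1],[1, x^{-1}]] satisfies |tr(A^{-1} M_x)| > 2 is unbounded; hence the family { M_x : x > 0 } cannot be covered by finitely many translates of (SO_2(ℝ))^{SL_2(ℝ)}. -/

import Mathlib

abbrev SL2 := Matrix.SpecialLinearGroup (Fin 2) ℝ

/-- A rotation matrix in `SL₂(ℝ)`, i.e. an element of `SO₂(ℝ)`. -/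
def IsRot (q : SL2) : Prop :=
  ∃ θ : ℝ, (q : Matrix (Fin 2) (Fin 2) ℝ) =
    !![Real.cos θ, Real.sin θ; -Real.sin θ, Real.cos θ]

/-- The matrix `[[x², x−1], [1, x⁻¹]]`, an element of `SL₂(ℝ)` for `x ≠ 0`. -/
noncomputable def Mx (x : ℝ) (hx : x ≠ 0) : SL2 :=
  ⟨!![x ^ 2, x - 1; 1, x⁻¹], by rw [Matrix.det_fin_two_of]; field_simp; ring⟩

open Filter in
lemma abs_tendsto_aux (a c e d : ℝ) (h : a ≠ 0 ∨ c ≠ 0) :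
    Tendsto (fun x : ℝ => |a * x ^ 2 + c * x + e + d * x⁻¹|) atTop atTop := by
  by_cases ha : a ≠ 0
  · have hg : Tendsto (fun x : ℝ => |a + c * x⁻¹ + e * x⁻¹ * x⁻¹ + d * x⁻¹ * x⁻¹ * x⁻¹|)
        atTop (nhds |a|) := by
      have h0 : Tendsto (fun x : ℝ => x⁻¹) atTop (nhds 0) := tendsto_inv_atTop_zero
      have : Tendsto (fun x : ℝ => a + c * x⁻¹ + e * x⁻¹ * x⁻¹ + d * x⁻¹ * x⁻¹ * x⁻¹)
          atTop (nhds (a + c * 0 + e * 0 * 0 + d * 0 * 0 * 0)) := by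
        exact ((((tendsto_const_nhds.add (tendsto_const_nhds.mul h0)).add
          ((tendsto_const_nhds.mul h0).mul h0)).add
          (((tendsto_const_nhds.mul h0).mul h0).mul h0)))
      simpa using this.abs
    have hmul : Tendsto (fun x : ℝ =>
        x ^ 2 * |a + c * x⁻¹ + e * x⁻¹ * x⁻¹ + d * x⁻¹ * x⁻¹ * x⁻¹|) atTop atTop :=
      (tendsto_pow_atTop two_ne_zero).atTop_mul_pos (abs_pos.2 ha) hg
    refine hmul.congr' ?_
    filter_upwards [eventually_gt_atTop (0 : ℝ)] with x hx
    have hfx : a * x ^ 2 + c * x + e + d * x⁻¹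
        = x ^ 2 * (a + c * x⁻¹ + e * x⁻¹ * x⁻¹ + d * x⁻¹ * x⁻¹ * x⁻¹) := by
      field_simp
    rw [hfx, abs_mul, abs_of_nonneg (sq_nonneg x)]
  · push_neg at ha
    have hc : c ≠ 0 := h.resolve_left (by simp [ha])
    subst ha
    have hg : Tendsto (fun x : ℝ => |c + e * x⁻¹ + d * x⁻¹ * x⁻¹|) atTop (nhds |c|) := by
      have h0 : Tendsto (fun x : ℝ => x⁻¹) atTop (nhds 0) := tendsto_inv_atTop_zero
      have : Tendsto (fun x : ℝ => c + e * x⁻¹ + d * x⁻¹ * x⁻¹)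
          atTop (nhds (c + e * 0 + d * 0 * 0)) :=
        (tendsto_const_nhds.add (tendsto_const_nhds.mul h0)).add
          ((tendsto_const_nhds.mul h0).mul h0)
      simpa using this.abs
    have hmul : Tendsto (fun x : ℝ =>
        x * |c + e * x⁻¹ + d * x⁻¹ * x⁻¹|) atTop atTop :=
      tendsto_id.atTop_mul_pos (abs_pos.2 hc) hg
    refine hmul.congr' ?_
    filter_upwards [eventually_gt_atTop (0 : ℝ)] with x hx
    have hfx : 0 * x ^ 2 + c * x + e + d * x⁻¹
        = x * (c + e * x⁻¹ + d * x⁻¹ * x⁻¹) := by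
      field_simp
      ring
    rw [hfx, abs_mul, abs_of_nonneg hx.le]

lemma trace_formula (B : SL2) (x : ℝ) (hx : x ≠ 0) :
    Matrix.trace ((B * Mx x hx : SL2) : Matrix (Fin 2) (Fin 2) ℝ) =
      (B : Matrix (Fin 2) (Fin 2) ℝ) 0 0 * x ^ 2
      + (B : Matrix (Fin 2) (Fin 2) ℝ) 1 0 * x
      + ((B : Matrix (Fin 2) (Fin 2) ℝ) 0 1 - (B : Matrix (Fin 2) (Fin 2) ℝ) 1 0)
      + (B : Matrix (Fin 2) (Fin 2) ℝ) 1 1 * x⁻¹ := by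
  show Matrix.trace ((B : Matrix (Fin 2) (Fin 2) ℝ) * (Mx x hx : Matrix (Fin 2) (Fin 2) ℝ)) = _
  simp [Matrix.trace_fin_two, Mx, Matrix.mul_apply, Fin.sum_univ_two]
  ring

open Filter in
lemma exists_bound (A : SL2) : ∃ X : ℝ, ∀ x : ℝ, ∀ hx : 0 < x, X < x →
    2 < |Matrix.trace ((A⁻¹ * Mx x hx.ne' : SL2) : Matrix (Fin 2) (Fin 2) ℝ)| := by
  set B : SL2 := A⁻¹ with hB
  set a := (B : Matrix (Fin 2) (Fin 2) ℝ) 0 0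
  set c := (B : Matrix (Fin 2) (Fin 2) ℝ) 1 0
  set e := (B : Matrix (Fin 2) (Fin 2) ℝ) 0 1 - (B : Matrix (Fin 2) (Fin 2) ℝ) 1 0
  set d := (B : Matrix (Fin 2) (Fin 2) ℝ) 1 1
  have hac : a ≠ 0 ∨ c ≠ 0 := by
    by_contra hcon
    push_neg at hcon
    have hdet := B.2
    rw [Matrix.det_fin_two] at hdet
    rw [show (B : Matrix (Fin 2) (Fin 2) ℝ) 0 0 = a from rfl,
      show (B : Matrix (Fin 2) (Fin 2) ℝ) 1 0 = c from rfl, hcon.1, hcon.2] at hdet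
    simp at hdet
  have ht := abs_tendsto_aux a c e d hac
  have hev : ∀ᶠ x : ℝ in atTop, 2 < |a * x ^ 2 + c * x + e + d * x⁻¹| :=
    ht.eventually_gt_atTop 2
  obtain ⟨X, hX⟩ := hev.exists_forall_of_atTop
  refine ⟨X, fun x hx hXx => ?_⟩
  rw [trace_formula B x hx.ne']
  exact hX x hXx.le

theorem cartan_stmt13 :
    (∀ A : SL2, ∀ C : ℝ, ∃ x : ℝ, ∃ hx : 0 < x, C < x ∧
        2 < |Matrix.trace ((A⁻¹ * Mx x hx.ne' : SL2) : Matrix (Fin 2) (Fin 2) ℝ)|) ∧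
    (∀ (n : ℕ) (A : Fin n → SL2),
      ¬ ∀ (x : ℝ) (hx : 0 < x), ∃ i : Fin n, ∃ g q : SL2, IsRot q ∧
          Mx x hx.ne' = A i * (g⁻¹ * q * g)) := by
  constructor
  · intro A C
    obtain ⟨X, hX⟩ := exists_bound A
    have hp : (0:ℝ) < max (max C X) 0 + 1 := by
      have := le_max_right (max C X) (0:ℝ); linarith
    refine ⟨max (max C X) 0 + 1, hp, ?_, ?_⟩
    · have h1 : C ≤ max C X := le_max_left _ _
      have h2 : max C X ≤ max (max C X) 0 := le_max_left _ _
      linarith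
    · refine hX _ hp ?_
      have h1 : X ≤ max C X := le_max_right _ _
      have h2 : max C X ≤ max (max C X) 0 := le_max_left _ _
      linarith
  · intro n A h
    choose X hX using fun i => exists_bound (A i)
    set x : ℝ := 1 + ∑ i, |X i| with hxdef
    have hsum : (0:ℝ) ≤ ∑ i, |X i| := Finset.sum_nonneg fun i _ => abs_nonneg _
    have hx : 0 < x := by positivity
    obtain ⟨i, g, q, ⟨θ, hθ⟩, heq⟩ := h x hx
    have hXi : X i < x := by
      have h1 : |X i| ≤ ∑ j, |X j| :=
        Finset.single_le_sum (f := fun j => |X j|) (fun j _ => abs_nonneg _) (Finset.mem_univ i)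
      have h2 : X i ≤ |X i| := le_abs_self _
      linarith
    have hgt := hX i x hx hXi
    have h2 : (A i)⁻¹ * Mx x hx.ne' = g⁻¹ * q * g := by
      rw [heq, inv_mul_cancel_left]
    rw [h2] at hgt
    have htr : Matrix.trace ((g⁻¹ * q * g : SL2) : Matrix (Fin 2) (Fin 2) ℝ)
        = 2 * Real.cos θ := by
      have : ((g⁻¹ * q * g : SL2) : Matrix (Fin 2) (Fin 2) ℝ)
          = (g⁻¹ : SL2) * (q : Matrix (Fin 2) (Fin 2) ℝ) * (g : SL2) := by
        simp
      rw [this, Matrix.trace_mul_cycle]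
      have hg1 : ((g : SL2) : Matrix (Fin 2) (Fin 2) ℝ) * ((g⁻¹ : SL2) : Matrix (Fin 2) (Fin 2) ℝ)
          = 1 := by
        rw [← Matrix.SpecialLinearGroup.coe_mul, mul_inv_cancel]
        simp
      rw [hg1, one_mul, hθ, Matrix.trace_fin_two]
      simp
      ring
    rw [htr] at hgt
    have : |2 * Real.cos θ| ≤ 2 := by
      rw [abs_mul]
      have := Real.abs_cos_le_one θ
      norm_num
      linarith [Real.neg_one_le_cos θ, Real.cos_le_one θ]
    linarith
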